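/- arXiv:2202.12999 — 3 statements merged into one kernel-verified Lean document; each statement's English description precedes it below -/
import Mathlib

section
/- Fix $0<\nu\leq\Lambda<\infty$, $1<p\leq q$, $\mu\in[0,1]$, $\varepsilon,T\in(0,1]$. Let $g_1(s)=\nu(\mu^2+s^2)^{(p-2)/2}$, $g_{2,\varepsilon}(s)=\Lambda(\mu^2+s^2)^{(p-2)/2}+\Lambda(\mu^2+s^2)^{(q-2)/2}+\varepsilon\Lambda(1+s^2)^{\min\{p-2,0\}/2}$, and $G_T(t)=\frac{\nu}{p}(\mu^2+t^2)^{p/2}-\frac{\nu}{p}(\mu^2+T^2)^{p/2}$ for $t\geq T$. Then there exists $c_1=c_1(\nu,\Lambda,p,q)\geq 1$ such that for all $t\geq T$: $\frac{g_{2,\varepsilon}(t)}{g_1(t)}\leq c_1\big(G_T(t)^{(q-p)/p}+1+\frac{\varepsilon}{(\mu^2+T^2)^{(p-2)/2}}\big)$. -/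
lemma add_rpow_le_two_rpow (x y r : ℝ) (hx : 0 ≤ x) (hy : 0 ≤ y) (hr : 0 ≤ r) :
    (x + y) ^ r ≤ 2 ^ r * (x ^ r + y ^ r) := by
  have hm : x + y ≤ 2 * max x y := by
    rcases le_total x y with h | h
    · rw [max_eq_right h]; linarith
    · rw [max_eq_left h]; linarith
  have hmax : 0 ≤ max x y := le_max_of_le_left hx
  calc (x + y) ^ r ≤ (2 * max x y) ^ r :=
        Real.rpow_le_rpow (by linarith) hm hr
    _ = 2 ^ r * (max x y) ^ r := Real.mul_rpow (by norm_num) hmax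
    _ ≤ 2 ^ r * (x ^ r + y ^ r) := by
        have h2 : (max x y) ^ r ≤ x ^ r + y ^ r := by
          rcases le_total x y with h | h
          · rw [max_eq_right h]
            exact le_add_of_nonneg_left (Real.rpow_nonneg hx r)
          · rw [max_eq_left h]
            exact le_add_of_nonneg_right (Real.rpow_nonneg hy r)
        exact mul_le_mul_of_nonneg_left h2 (Real.rpow_nonneg (by norm_num) r)

set_option maxHeartbeats 1000000 in
/-- Bound on the ellipticity ratio `g_{2,ε}/g_1` in terms of `G_T`. -/
theorem ellipticity_ratio_bound (ν Λ p q : ℝ) (hν : 0 < ν) (hνΛ : ν ≤ Λ)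
    (hp : 1 < p) (hpq : p ≤ q) :
    ∃ c₁ : ℝ, 1 ≤ c₁ ∧ ∀ μ ε T : ℝ, 0 ≤ μ → μ ≤ 1 → 0 < ε → ε ≤ 1 → 0 < T → T ≤ 1 →
      ∀ t ≥ T,
        (Λ * (μ^2 + t^2) ^ ((p-2)/2) + Λ * (μ^2 + t^2) ^ ((q-2)/2) +
            ε * Λ * (1 + t^2) ^ (min (p-2) 0 / 2)) / (ν * (μ^2 + t^2) ^ ((p-2)/2)) ≤
          c₁ * ((ν/p * (μ^2 + t^2) ^ (p/2) - ν/p * (μ^2 + T^2) ^ (p/2)) ^ ((q-p)/p)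
            + 1 + ε / (μ^2 + T^2) ^ ((p-2)/2)) := by
  have hp0 : 0 < p := by linarith
  set r : ℝ := (q - p) / p with hr_def
  have hr : 0 ≤ r := div_nonneg (by linarith) hp0.le
  set K : ℝ := Λ / ν with hK_def
  have hK1 : 1 ≤ K := (one_le_div hν).mpr hνΛ
  have hK0 : 0 < K := lt_of_lt_of_le one_pos hK1
  set T1 : ℝ := 2 ^ r * (p / ν) ^ r with hT1_def
  set T2 : ℝ := 2 ^ r * 2 ^ ((q - p) / 2) with hT2_def
  have hT1 : 0 ≤ T1 := mul_nonneg (Real.rpow_nonneg (by norm_num) r)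
    (Real.rpow_nonneg (div_nonneg hp0.le hν.le) r)
  have hT2 : 0 ≤ T2 := mul_nonneg (Real.rpow_nonneg (by norm_num) r)
    (Real.rpow_nonneg (by norm_num) _)
  refine ⟨K * (T1 + T2 + 3), ?_, ?_⟩
  · have h3 : (1:ℝ) ≤ T1 + T2 + 3 := by linarith
    calc (1:ℝ) = 1 * 1 := by ring
      _ ≤ K * (T1 + T2 + 3) := mul_le_mul hK1 h3 one_pos.le (le_trans zero_le_one hK1)
  intro μ ε T hμ hμ1 hε hε1 hT hT1' t ht
  have ht0 : 0 < t := lt_of_lt_of_le hT ht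
  set A : ℝ := μ ^ 2 + t ^ 2 with hA_def
  set B : ℝ := μ ^ 2 + T ^ 2 with hB_def
  have hA : 0 < A := by positivity
  have hB : 0 < B := by positivity
  have hBA : B ≤ A := by nlinarith
  have hA1 : A ≤ 1 + t ^ 2 := by nlinarith
  have hB2 : B ≤ 2 := by nlinarith
  have hApow : (0:ℝ) < A ^ ((p - 2) / 2) := Real.rpow_pos_of_pos hA _
  have hBpow : (0:ℝ) < B ^ ((p - 2) / 2) := Real.rpow_pos_of_pos hB _
  set C : ℝ := (1 + t ^ 2) ^ (min (p - 2) 0 / 2) with hC_def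
  set G : ℝ := ν / p * A ^ (p / 2) - ν / p * B ^ (p / 2) with hG_def
  have hG : 0 ≤ G := by
    have := Real.rpow_le_rpow hB.le hBA (by positivity : (0:ℝ) ≤ p / 2)
    have := mul_le_mul_of_nonneg_left this (by positivity : (0:ℝ) ≤ ν / p)
    simp only [hG_def]; linarith
  have hg : 0 ≤ G ^ r := Real.rpow_nonneg hG r
  -- rewrite the LHS
  have hsplit : (Λ * A ^ ((p-2)/2) + Λ * A ^ ((q-2)/2) + ε * Λ * C) / (ν * A ^ ((p-2)/2))
      = K + K * A ^ ((q-p)/2) + ε * K * (C / A ^ ((p-2)/2)) := by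
    have h1 : A ^ ((q-2)/2) = A ^ ((q-p)/2) * A ^ ((p-2)/2) := by
      rw [← Real.rpow_add hA]; ring_nf
    rw [h1, hK_def]
    field_simp
  rw [hsplit]
  -- bound on C / A^((p-2)/2)
  have hCb : C / A ^ ((p - 2) / 2) ≤ 1 + 1 / B ^ ((p - 2) / 2) := by
    rcases le_total p 2 with h2 | h2
    · have hmin : min (p - 2) 0 = p - 2 := min_eq_left (by linarith)
      have hC1 : C ≤ A ^ ((p - 2) / 2) := by
        rw [hC_def, hmin]
        exact Real.rpow_le_rpow_of_nonpos hA hA1 (by linarith)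
      have : C / A ^ ((p - 2) / 2) ≤ 1 := (div_le_one hApow).mpr hC1
      have h1B : 0 ≤ 1 / B ^ ((p - 2) / 2) := by positivity
      linarith
    · have hmin : min (p - 2) 0 = 0 := min_eq_right (by linarith)
      have hC1 : C = 1 := by rw [hC_def, hmin]; simp
      rw [hC1]
      have hle : B ^ ((p - 2) / 2) ≤ A ^ ((p - 2) / 2) :=
        Real.rpow_le_rpow hB.le hBA (by linarith)
      have : 1 / A ^ ((p - 2) / 2) ≤ 1 / B ^ ((p - 2) / 2) :=
        one_div_le_one_div_of_le hBpow hle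
      linarith
  -- bound on A^((q-p)/2)
  have hXY : (p / ν) * G + B ^ (p / 2) = A ^ (p / 2) := by
    rw [hG_def]; field_simp; ring
  have hAq : A ^ ((q - p) / 2) = (A ^ (p / 2)) ^ r := by
    rw [← Real.rpow_mul hA.le]
    congr 1
    rw [hr_def]
    field_simp
  have hAb : A ^ ((q - p) / 2) ≤ T1 * G ^ r + T2 := by
    rw [hAq, ← hXY]
    have h1 : ((p / ν) * G + B ^ (p / 2)) ^ r
        ≤ 2 ^ r * (((p / ν) * G) ^ r + (B ^ (p / 2)) ^ r) :=
      add_rpow_le_two_rpow _ _ r (mul_nonneg (by positivity) hG)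
        (Real.rpow_nonneg hB.le _) hr
    have h2 : ((p / ν) * G) ^ r = (p / ν) ^ r * G ^ r :=
      Real.mul_rpow (by positivity) hG
    have h3 : (B ^ (p / 2)) ^ r ≤ 2 ^ ((q - p) / 2) := by
      have he : (B ^ (p / 2)) ^ r = B ^ ((q - p) / 2) := by
        rw [← Real.rpow_mul hB.le]
        congr 1
        rw [hr_def]
        field_simp
      rw [he]
      exact Real.rpow_le_rpow hB.le hB2 (by linarith)
    calc ((p / ν) * G + B ^ (p / 2)) ^ r
        ≤ 2 ^ r * (((p / ν) * G) ^ r + (B ^ (p / 2)) ^ r) := h1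
      _ = 2 ^ r * (p / ν) ^ r * G ^ r + 2 ^ r * (B ^ (p / 2)) ^ r := by rw [h2]; ring
      _ ≤ T1 * G ^ r + T2 := by
          rw [hT1_def, hT2_def]
          have h4 : 2 ^ r * (B ^ (p / 2)) ^ r ≤ 2 ^ r * 2 ^ ((q - p) / 2) :=
            mul_le_mul_of_nonneg_left h3 (Real.rpow_nonneg (by norm_num) r)
          linarith
  -- assemble
  have heB : ε / B ^ ((p - 2) / 2) = ε * (1 / B ^ ((p - 2) / 2)) := by ring
  set e : ℝ := 1 / B ^ ((p - 2) / 2) with he_def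
  have he0 : 0 ≤ e := by positivity
  have hεe : 0 ≤ ε * e := mul_nonneg hε.le he0
  calc K + K * A ^ ((q - p) / 2) + ε * K * (C / A ^ ((p - 2) / 2))
      ≤ K + K * (T1 * G ^ r + T2) + ε * K * (1 + e) := by
        have b1 : K * A ^ ((q - p) / 2) ≤ K * (T1 * G ^ r + T2) :=
          mul_le_mul_of_nonneg_left hAb hK0.le
        have b2 : ε * K * (C / A ^ ((p - 2) / 2)) ≤ ε * K * (1 + e) :=
          mul_le_mul_of_nonneg_left hCb (by positivity)
        linarith
    _ ≤ K * (T1 + T2 + 3) * (G ^ r + 1 + ε / B ^ ((p - 2) / 2)) := by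
        rw [heB]
        have hc1 : K * T1 ≤ K * (T1 + T2 + 3) :=
          mul_le_mul_of_nonneg_left (by linarith) hK0.le
        have hc2 : K ≤ K * (T1 + T2 + 3) := by
          nth_rewrite 1 [← mul_one K]
          exact
          mul_le_mul_of_nonneg_left (by linarith) hK0.le
        have b1 : K * T1 * (G ^ r) ≤ K * (T1 + T2 + 3) * (G ^ r) :=
          mul_le_mul_of_nonneg_right hc1 hg
        have hεK : ε * K ≤ 1 * K := mul_le_mul_of_nonneg_right hε1 hK0.le
        have hKT1 : 0 ≤ K * T1 := mul_nonneg hK0.le hT1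
        have b2 : K + K * T2 + ε * K ≤ K * (T1 + T2 + 3) := by
          have hexp : K * (T1 + T2 + 3) = K * T1 + K * T2 + 3 * K := by ring
          linarith
        have b3 : K * (ε * e) ≤ K * (T1 + T2 + 3) * (ε * e) :=
          mul_le_mul_of_nonneg_right hc2 hεe
        linarith
end

section
/- Let $n\geq 3$ and $\Lambda\geq 1$, and let $v(x)=x_n^2+1-\Lambda|x'|^2$ on $\mathbb{R}^n=\mathbb{R}^{n-1}\times\mathbb{R}$. Then there exists a constant $C=C(n)<\infty$, independent of $\Lambda$, such that $\int_{B_1}(\max\{v,0\})^2\,dx \leq C\,\Lambda^{-(n-1)/2}$. Consequently, since $\sup_{B_{1/4}} v\geq v(0)=1$, the ratio $\|v_+\|_{L^\infty(B_{1/4})}/\|v_+\|_{L^2(B_1)}\geq c(n)\,\Lambda^{(n-1)/4}$ for some $c(n)>0$. -/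
open MeasureTheory Metric

set_option maxHeartbeats 1000000 in
/-- For `v(x) = x_n² + 1 - Λ|x'|²`, one has `∫_{B_1} (v_+)² ≤ C Λ^{-(n-1)/2}` and hence
the `L^∞(B_{1/4})`–`L²(B_1)` ratio of `v_+` is at least `c Λ^{(n-1)/4}`. -/
theorem counterexample_L2_bound (n : ℕ) (hn : 3 ≤ n) :
    ∃ C c : ℝ, 0 < C ∧ 0 < c ∧ ∀ Λ : ℝ, 1 ≤ Λ →
      ∀ v : EuclideanSpace ℝ (Fin n) → ℝ,
      (∀ x : EuclideanSpace ℝ (Fin n), v x = x ⟨n - 1, by omega⟩ ^ 2 + 1 -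
        Λ * ∑ i : Fin n, (if (i : ℕ) < n - 1 then x i ^ 2 else 0)) →
      (∫ x in ball (0 : EuclideanSpace ℝ (Fin n)) 1, max (v x) 0 ^ 2) ≤
          C * Λ ^ (-((n:ℝ) - 1)/2) ∧
      c * Λ ^ (((n:ℝ) - 1)/4) *
          (∫ x in ball (0 : EuclideanSpace ℝ (Fin n)) 1, max (v x) 0 ^ 2) ^ ((1:ℝ)/2) ≤
        sSup ((fun x => max (v x) 0) '' ball (0 : EuclideanSpace ℝ (Fin n)) (1/4)) := by
  obtain ⟨m, rfl⟩ : ∃ m, n = m + 1 := ⟨n - 1, by omega⟩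
  set C : ℝ := 8 * (2 * Real.sqrt 2) ^ m with hC
  have hC0 : 0 < C := by positivity
  refine ⟨C, C ^ (-(1:ℝ)/2), hC0, Real.rpow_pos_of_pos hC0 _, ?_⟩
  intro Λ hΛ v hv0
  have hv : ∀ x : EuclideanSpace ℝ (Fin (m+1)),
      v x = x ⟨m, Nat.lt_succ_self m⟩ ^ 2 + 1 -
        Λ * ∑ i : Fin (m+1), (if (i : ℕ) < m then x i ^ 2 else 0) := hv0
  clear hv0
  set j : Fin (m+1) := ⟨m, Nat.lt_succ_self m⟩ with hj
  have hΛ0 : (0:ℝ) < Λ := lt_of_lt_of_le one_pos hΛ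
  have hcoord : ∀ (x : EuclideanSpace ℝ (Fin (m+1))) (i : Fin (m+1)), |x i| ≤ ‖x‖ := by
    intro x i
    rw [EuclideanSpace.norm_eq, ← Real.sqrt_sq_eq_abs]
    apply Real.sqrt_le_sqrt
    calc x i ^ 2 ≤ ∑ k, x k ^ 2 :=
          Finset.single_le_sum (f := fun k => x k ^ 2) (fun k _ => sq_nonneg _) (Finset.mem_univ i)
      _ = ∑ k, ‖x k‖ ^ 2 := by simp [sq_abs]
  set r : ℝ := Real.sqrt 2 * Λ ^ (-(1:ℝ)/2) with hrdef
  have hr0 : 0 < r := by positivity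
  have hΛr : Λ * r ^ 2 = 2 := by
    rw [hrdef, mul_pow, Real.sq_sqrt (by norm_num : (0:ℝ) ≤ 2),
      ← Real.rpow_natCast (Λ ^ (-(1:ℝ)/2)) 2, ← Real.rpow_mul hΛ0.le]
    norm_num
    rw [Real.rpow_neg_one]
    field_simp
  set b : Fin (m+1) → ℝ := fun i => if (i:ℕ) < m then r else 1 with hbdef
  have hb0 : ∀ i, 0 < b i := fun i => by
    by_cases h : (i:ℕ) < m <;> simp [hbdef, h, hr0]
  set Box : Set (EuclideanSpace ℝ (Fin (m+1))) := {x | ∀ i, x i ∈ Set.Icc (-b i) (b i)}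
    with hBoxdef
  have hBoxeq : Box = (MeasurableEquiv.toLp 2 (Fin (m+1) → ℝ)).symm ⁻¹'
      (Set.univ.pi fun i => Set.Icc (-b i) (b i)) := by
    ext x
    simp [hBoxdef, MeasurableEquiv.coe_toLp_symm, Set.mem_univ_pi, Pi.le_def, forall_and]
  have hBoxMeas : MeasurableSet Box := by
    rw [hBoxeq]
    exact (MeasurableEquiv.measurable _) (MeasurableSet.univ_pi fun i => measurableSet_Icc)
  have hBoxVol : volume Box = ENNReal.ofReal (2*r) ^ m * ENNReal.ofReal 2 := by
    rw [hBoxeq, (EuclideanSpace.volume_preserving_symm_measurableEquiv_toLp (Fin (m+1))).measure_preimage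
      ((MeasurableSet.univ_pi fun i => measurableSet_Icc).nullMeasurableSet), volume_pi_pi]
    rw [Fin.prod_univ_castSucc]
    have h1 : ∀ i : Fin m, volume (Set.Icc (-b i.castSucc) (b i.castSucc))
        = ENNReal.ofReal (2*r) := by
      intro i
      rw [Real.volume_Icc]
      congr 1
      simp only [hbdef, Fin.coe_castSucc, i.is_lt, if_true]
      ring
    have h2 : volume (Set.Icc (-b (Fin.last m)) (b (Fin.last m))) = ENNReal.ofReal 2 := by
      rw [Real.volume_Icc]
      congr 1
      simp only [hbdef, Fin.val_last, lt_irrefl, if_false]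
      norm_num
    simp_rw [h1, h2, Finset.prod_const, Finset.card_univ, Fintype.card_fin]
  have hfin : volume Box ≠ ⊤ := by
    rw [hBoxVol]
    exact ENNReal.mul_ne_top (ENNReal.pow_ne_top ENNReal.ofReal_ne_top) ENNReal.ofReal_ne_top
  have hvcont : Continuous v := by
    have hveq : v = fun x : EuclideanSpace ℝ (Fin (m+1)) => x j ^ 2 + 1 -
        Λ * ∑ i : Fin (m+1), (if (i : ℕ) < m then x i ^ 2 else 0) := funext hv
    rw [hveq]
    have hc2 : ∀ i : Fin (m+1),
        Continuous fun x : EuclideanSpace ℝ (Fin (m+1)) => (if (i:ℕ) < m then x i ^ 2 else 0 : ℝ) := by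
      intro i
      by_cases h : (i:ℕ) < m
      · simp only [h, if_true]
        exact ((continuous_apply i).comp (PiLp.continuous_ofLp 2 _)).pow 2
      · simp only [h, if_false]
        exact continuous_const
    exact ((((continuous_apply j).comp (PiLp.continuous_ofLp 2 _)).pow 2).add continuous_const).sub
      (continuous_const.mul (continuous_finset_sum _ fun i _ => hc2 i))
  have hf_cont : Continuous fun x : EuclideanSpace ℝ (Fin (m+1)) => max (v x) 0 ^ 2 :=
    (hvcont.max continuous_const).pow 2
  have hf_int : IntegrableOn (fun x => max (v x) 0 ^ 2)
      (ball (0:EuclideanSpace ℝ (Fin (m+1))) 1) volume :=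
    (hf_cont.continuousOn.integrableOn_compact (isCompact_closedBall _ _)).mono_set
      ball_subset_closedBall
  have hh_int : IntegrableOn (Box.indicator fun _ => (4:ℝ))
      (ball (0:EuclideanSpace ℝ (Fin (m+1))) 1) volume :=
    ((integrableOn_const measure_ball_lt_top.ne)).indicator hBoxMeas
  have hsum0 : ∀ x : EuclideanSpace ℝ (Fin (m+1)),
      0 ≤ ∑ i : Fin (m+1), (if (i : ℕ) < m then x i ^ 2 else 0) := by
    intro x
    apply Finset.sum_nonneg
    intro i _
    by_cases h : (i:ℕ) < m <;> simp [h, sq_nonneg]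
  have hle : ∀ x ∈ ball (0:EuclideanSpace ℝ (Fin (m+1))) 1,
      max (v x) 0 ^ 2 ≤ Box.indicator (fun _ => (4:ℝ)) x := by
    intro x hx
    have hn1 : ‖x‖ < 1 := by simpa [mem_ball, dist_zero_right] using hx
    have hxn : |x j| ≤ ‖x‖ := hcoord x j
    have hxn2 : x j ^ 2 ≤ 1 := by
      nlinarith [abs_nonneg (x j), sq_abs (x j)]
    by_cases hxB : x ∈ Box
    · rw [Set.indicator_of_mem hxB]
      have hv2 : v x ≤ 2 := by
        rw [hv x]
        nlinarith [mul_nonneg hΛ0.le (hsum0 x)]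
      have h2 : max (v x) 0 ≤ 2 := max_le hv2 (by norm_num)
      nlinarith [le_max_right (v x) (0:ℝ)]
    · rw [Set.indicator_of_notMem hxB]
      have hv0 : v x ≤ 0 := by
        obtain ⟨i, hi⟩ := not_forall.mp hxB
        have hib : b i < |x i| := by
          rw [Set.mem_Icc, not_and_or] at hi
          rcases hi with h | h
          · push_neg at h
            rw [abs_of_neg (by nlinarith [hb0 i])]
            linarith
          · push_neg at h
            calc b i < x i := h
              _ ≤ |x i| := le_abs_self _
        have him : (i:ℕ) < m := by
          by_contra him
          have hb1 : b i = 1 := by simp [hbdef, him]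
          have hci := hcoord x i
          rw [hb1] at hib
          linarith
        have hbi : b i = r := by simp [hbdef, him]
        rw [hbi] at hib
        have hri : r ^ 2 < x i ^ 2 := by
          calc r ^ 2 < |x i| ^ 2 := by nlinarith
            _ = x i ^ 2 := sq_abs _
        have hsum : x i ^ 2 ≤ ∑ k : Fin (m+1), (if (k:ℕ) < m then x k ^ 2 else 0) := by
          have := Finset.single_le_sum
            (f := fun k : Fin (m+1) => if (k:ℕ) < m then x k ^ 2 else 0)
            (fun k _ => by by_cases h : (k:ℕ) < m <;> simp [h, sq_nonneg])
            (Finset.mem_univ i)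
          simpa [him] using this
        rw [hv x]
        nlinarith [mul_le_mul_of_nonneg_left hsum hΛ0.le,
          mul_lt_mul_of_pos_left hri hΛ0]
      simp [max_eq_right hv0]
  have step1 : (∫ x in ball (0:EuclideanSpace ℝ (Fin (m+1))) 1, max (v x) 0 ^ 2)
      ≤ ∫ x in ball (0:EuclideanSpace ℝ (Fin (m+1))) 1, Box.indicator (fun _ => (4:ℝ)) x :=
    setIntegral_mono_on hf_int hh_int measurableSet_ball hle
  have step2 : (∫ x in ball (0:EuclideanSpace ℝ (Fin (m+1))) 1,
      Box.indicator (fun _ => (4:ℝ)) x)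
      = (volume (ball (0:EuclideanSpace ℝ (Fin (m+1))) 1 ∩ Box)).toReal * 4 := by
    rw [setIntegral_indicator hBoxMeas, setIntegral_const, smul_eq_mul, measureReal_def]
  have step3 : (volume (ball (0:EuclideanSpace ℝ (Fin (m+1))) 1 ∩ Box)).toReal
      ≤ (volume Box).toReal :=
    ENNReal.toReal_mono hfin (measure_mono Set.inter_subset_right)
  have hBoxToReal : (volume Box).toReal = (2*r)^m * 2 := by
    rw [hBoxVol, ENNReal.toReal_mul, ENNReal.toReal_pow,
      ENNReal.toReal_ofReal (by positivity), ENNReal.toReal_ofReal (by norm_num)]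
  have hpow : (Λ ^ (-(1:ℝ)/2)) ^ m = Λ ^ (-((↑(m+1):ℝ)-1)/2) := by
    rw [← Real.rpow_natCast (Λ ^ (-(1:ℝ)/2)) m, ← Real.rpow_mul hΛ0.le]
    congr 1
    push_cast
    ring
  have hCeq : (2*r)^m * 2 * 4 = C * Λ ^ (-((↑(m+1):ℝ)-1)/2) := by
    rw [← hpow, hrdef, hC,
      show (2:ℝ) * (Real.sqrt 2 * Λ ^ (-(1:ℝ)/2)) = (2*Real.sqrt 2) * Λ ^ (-(1:ℝ)/2) from by ring,
      mul_pow]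
    ring
  have key : (∫ x in ball (0:EuclideanSpace ℝ (Fin (m+1))) 1, max (v x) 0 ^ 2)
      ≤ C * Λ ^ (-((↑(m+1):ℝ)-1)/2) := by
    calc (∫ x in ball (0:EuclideanSpace ℝ (Fin (m+1))) 1, max (v x) 0 ^ 2)
        ≤ (volume (ball (0:EuclideanSpace ℝ (Fin (m+1))) 1 ∩ Box)).toReal * 4 :=
          step1.trans (le_of_eq step2)
      _ ≤ (volume Box).toReal * 4 := by nlinarith [step3]
      _ = (2*r)^m * 2 * 4 := by rw [hBoxToReal]
      _ = C * Λ ^ (-((↑(m+1):ℝ)-1)/2) := hCeq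
  refine ⟨key, ?_⟩
  have hint0 : 0 ≤ ∫ x in ball (0:EuclideanSpace ℝ (Fin (m+1))) 1, max (v x) 0 ^ 2 :=
    integral_nonneg fun x => by positivity
  have hmem : (1:ℝ) ∈ (fun x => max (v x) 0) '' ball (0:EuclideanSpace ℝ (Fin (m+1))) (1/4) := by
    refine ⟨0, mem_ball_self (by norm_num), ?_⟩
    have h0 : v 0 = 1 := by
      rw [hv 0]
      simp
    simp [h0]
  have hbdd : BddAbove ((fun x => max (v x) 0) '' ball (0:EuclideanSpace ℝ (Fin (m+1))) (1/4)) := by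
    refine ⟨2, ?_⟩
    rintro y ⟨x, hx, rfl⟩
    have hn1 : ‖x‖ < 1/4 := by simpa [mem_ball, dist_zero_right] using hx
    have hxn : |x j| ≤ ‖x‖ := hcoord x j
    refine max_le ?_ (by norm_num)
    rw [hv x]
    nlinarith [mul_nonneg hΛ0.le (hsum0 x), sq_abs (x j), abs_nonneg (x j)]
  have hsup : (1:ℝ) ≤ sSup ((fun x => max (v x) 0) '' ball (0:EuclideanSpace ℝ (Fin (m+1))) (1/4)) :=
    le_csSup hbdd hmem
  calc C ^ (-(1:ℝ)/2) * Λ ^ (((↑(m+1):ℝ)-1)/4) *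
        (∫ x in ball (0:EuclideanSpace ℝ (Fin (m+1))) 1, max (v x) 0 ^ 2) ^ ((1:ℝ)/2)
      ≤ C ^ (-(1:ℝ)/2) * Λ ^ (((↑(m+1):ℝ)-1)/4) *
        (C * Λ ^ (-((↑(m+1):ℝ)-1)/2)) ^ ((1:ℝ)/2) := by
        apply mul_le_mul_of_nonneg_left (Real.rpow_le_rpow hint0 key (by norm_num))
        positivity
    _ = 1 := by
        rw [Real.mul_rpow hC0.le (Real.rpow_nonneg hΛ0.le _), ← Real.rpow_mul hΛ0.le,
          show C ^ (-(1:ℝ)/2) * Λ ^ (((↑(m+1):ℝ)-1)/4) *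
            (C ^ ((1:ℝ)/2) * Λ ^ (-((↑(m+1):ℝ)-1)/2 * (1/2)))
            = (C ^ (-(1:ℝ)/2) * C ^ ((1:ℝ)/2)) *
              (Λ ^ (((↑(m+1):ℝ)-1)/4) * Λ ^ (-((↑(m+1):ℝ)-1)/2 * (1/2))) from by ring,
          ← Real.rpow_add hC0, ← Real.rpow_add hΛ0,
          show -(1:ℝ)/2 + (1:ℝ)/2 = 0 from by ring,
          show ((↑(m+1):ℝ)-1)/4 + -((↑(m+1):ℝ)-1)/2 * (1/2) = 0 from by ring]
        simp
    _ ≤ _ := hsup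
end

section
/- Let $\tau\in(0,1/2)$, $\alpha>0$ satisfy $(2\tau)^{\beta}=2^{-\alpha}$ for some $\beta>0$, and let $(J_\ell)_{\ell\geq 0}$ be a sequence of non-negative reals. Suppose that constants $C_1,C_2,C_3>0$ and a sequence $(\Delta_\ell)_{\ell\geq 1}$ of positive reals satisfy: $\Delta_\ell \geq \Delta^{(1)}_\ell+\Delta^{(3)}_\ell$ with $\Delta^{(1)}_\ell=(2^\alpha 3C_1\tau^{-\beta-1})^{1/\beta}J_0 2^{-\ell}$ and $\Delta^{(3)}_\ell=(3C_3/\tau)^{1/\theta}\tau^{\ell-1}J_0$ for some $\theta>0$, and that the recursion $J_\ell\leq C_1 2^{(\ell+1)\alpha}(J_{\ell-1}/\Delta_\ell)^{\beta}J_{\ell-1}+\frac{1}{3}\tau^\ell J_0+C_3(J_{\ell-1}/\Delta_\ell)^{\theta}J_{\ell-1}$ holds for all $\ell\geq 1$. Then $J_\ell\leq \tau^\ell J_0$ for all $\ell\geq 0$. -/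
/-- Abstract geometric-decay induction of the De Giorgi-type iteration: the one-step
recursive inequality with the specified level increments `Δ_ℓ` forces `J_ℓ ≤ τ^ℓ J_0`. -/
theorem geometric_decay_induction (τ α β θ : ℝ)
    (hτ0 : 0 < τ) (hτ1 : τ < 1/2) (hα : 0 < α) (hβ : 0 < β) (hθ : 0 < θ)
    (hrel : (2*τ) ^ β = 2 ^ (-α))
    (J : ℕ → ℝ) (hJ : ∀ ℓ, 0 ≤ J ℓ)
    (C1 C2 C3 : ℝ) (hC1 : 0 < C1) (hC2 : 0 < C2) (hC3 : 0 < C3)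
    (Δ : ℕ → ℝ) (hΔpos : ∀ ℓ, 0 < Δ ℓ)
    (hΔ : ∀ ℓ : ℕ,
      (2 ^ α * 3 * C1 * τ ^ (-β - 1)) ^ (1/β) * J 0 * 2 ^ (-((ℓ:ℝ) + 1)) +
        (3 * C3 / τ) ^ (1/θ) * τ ^ ℓ * J 0 ≤ Δ (ℓ + 1))
    (hrec : ∀ ℓ : ℕ,
      J (ℓ + 1) ≤ C1 * 2 ^ (((ℓ:ℝ) + 2) * α) * (J ℓ / Δ (ℓ + 1)) ^ β * J ℓ +
        (1/3) * τ ^ (ℓ + 1) * J 0 + C3 * (J ℓ / Δ (ℓ + 1)) ^ θ * J ℓ) :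
    ∀ ℓ : ℕ, J ℓ ≤ τ ^ ℓ * J 0 := by
  have h2 : (0:ℝ) < 2 := by norm_num
  -- logarithmic form of the relation (2τ)^β = 2^(-α)
  have hlogrel : β * (Real.log 2 + Real.log τ) = -α * Real.log 2 := by
    have h := congrArg Real.log hrel
    rwa [Real.log_rpow (by positivity), Real.log_rpow h2,
      Real.log_mul (by norm_num) hτ0.ne'] at h
  set A : ℝ := (2 ^ α * 3 * C1 * τ ^ (-β - 1)) ^ (1/β) with hAdef
  set B : ℝ := (3 * C3 / τ) ^ (1/θ) with hBdef
  have hZpos : (0:ℝ) < 2 ^ α * 3 * C1 * τ ^ (-β - 1) := by positivity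
  have hApos : 0 < A := Real.rpow_pos_of_pos hZpos _
  have hBpos : 0 < B := Real.rpow_pos_of_pos (by positivity) _
  have hlA : β * Real.log A =
      α * Real.log 2 + Real.log 3 + Real.log C1 + (-β - 1) * Real.log τ := by
    rw [hAdef, Real.log_rpow hZpos, Real.log_mul (by positivity) (by positivity),
      Real.log_mul (by positivity) hC1.ne', Real.log_mul (by positivity) (by norm_num),
      Real.log_rpow h2, Real.log_rpow hτ0]
    field_simp
  intro ℓ
  induction ℓ with
  | zero => simp
  | succ n ih =>
    rcases eq_or_lt_of_le (hJ 0) with h0 | h0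
    · -- J 0 = 0 : everything vanishes
      have hJn : J n = 0 := le_antisymm (by nlinarith [pow_nonneg hτ0.le n, ih]) (hJ n)
      have := hrec n
      rw [hJn, ← h0] at this
      simp only [mul_zero, add_zero, zero_add] at this
      rw [← h0, mul_zero]
      linarith
    · -- main case : J 0 > 0
      have hΔn := hΔ n
      have hJnn := hJ n
      -- the two lower bounds on Δ (n+1)
      have hD1 : A * J 0 * 2 ^ (-((n:ℝ) + 1)) ≤ Δ (n + 1) :=
        le_trans (le_add_of_nonneg_right (by positivity)) hΔn
      have hD3 : B * τ ^ n * J 0 ≤ Δ (n + 1) :=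
        le_trans (le_add_of_nonneg_left (by positivity)) hΔn
      set X : ℝ := τ ^ n * 2 ^ ((n:ℝ) + 1) / A with hXdef
      have hXpos : 0 < X := by positivity
      -- ratio bound for the first term
      have hX1 : J n / Δ (n + 1) ≤ X := by
        have h1 : J n / Δ (n + 1) ≤ τ ^ n * J 0 / (A * J 0 * 2 ^ (-((n:ℝ) + 1))) :=
          div_le_div₀ (by positivity) ih (by positivity) hD1
        have heq : τ ^ n * J 0 / (A * J 0 * 2 ^ (-((n:ℝ) + 1))) = X := by
          rw [hXdef, Real.rpow_neg h2.le]
          field_simp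
        rwa [heq] at h1
      -- ratio bound for the third term
      have hX3 : J n / Δ (n + 1) ≤ 1 / B := by
        have h3 : J n / Δ (n + 1) ≤ τ ^ n * J 0 / (B * τ ^ n * J 0) :=
          div_le_div₀ (by positivity) ih (by positivity) hD3
        have heq : τ ^ n * J 0 / (B * τ ^ n * J 0) = 1 / B := by
          field_simp
        rwa [heq] at h3
      -- key scalar identity for the first term
      have key1 : C1 * 2 ^ (((n:ℝ) + 2) * α) * X ^ β = τ / 3 := by
        have hl : Real.log (C1 * 2 ^ (((n:ℝ) + 2) * α) * X ^ β) = Real.log (τ / 3) := by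
          rw [Real.log_mul (by positivity) (by positivity),
            Real.log_mul hC1.ne' (by positivity),
            Real.log_rpow h2, Real.log_rpow hXpos, hXdef,
            Real.log_div (by positivity) hApos.ne',
            Real.log_mul (by positivity) (by positivity),
            Real.log_pow, Real.log_rpow h2,
            Real.log_div hτ0.ne' (by norm_num)]
          linear_combination ((n:ℝ) + 1) * hlogrel - hlA
        have h := congrArg Real.exp hl
        rwa [Real.exp_log (by positivity), Real.exp_log (by positivity)] at h
      -- key scalar identity for the third term
      have key3 : (1 / B) ^ θ = τ / (3 * C3) := by
        rw [one_div, Real.inv_rpow hBpos.le, hBdef,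
          ← Real.rpow_mul (by positivity), one_div,
          inv_mul_cancel₀ hθ.ne', Real.rpow_one, inv_div]
      have hterm1 : C1 * 2 ^ (((n:ℝ) + 2) * α) * (J n / Δ (n + 1)) ^ β ≤ τ / 3 := by
        calc C1 * 2 ^ (((n:ℝ) + 2) * α) * (J n / Δ (n + 1)) ^ β
            ≤ C1 * 2 ^ (((n:ℝ) + 2) * α) * X ^ β := by
              have := Real.rpow_le_rpow (div_nonneg hJnn (hΔpos _).le) hX1 hβ.le
              exact mul_le_mul_of_nonneg_left this (by positivity)
          _ = τ / 3 := key1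
      have hterm3 : C3 * (J n / Δ (n + 1)) ^ θ ≤ τ / 3 := by
        calc C3 * (J n / Δ (n + 1)) ^ θ
            ≤ C3 * (1 / B) ^ θ := by
              have := Real.rpow_le_rpow (div_nonneg hJnn (hΔpos _).le) hX3 hθ.le
              exact mul_le_mul_of_nonneg_left this hC3.le
          _ = C3 * (τ / (3 * C3)) := by rw [key3]
          _ = τ / 3 := by field_simp
      have e1 : C1 * 2 ^ (((n:ℝ) + 2) * α) * (J n / Δ (n + 1)) ^ β * J n
          ≤ (τ / 3) * (τ ^ n * J 0) :=
        mul_le_mul hterm1 ih hJnn (by positivity)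
      have e3 : C3 * (J n / Δ (n + 1)) ^ θ * J n ≤ (τ / 3) * (τ ^ n * J 0) :=
        mul_le_mul hterm3 ih hJnn (by positivity)
      have hfin : (τ / 3) * (τ ^ n * J 0) + (1/3) * τ ^ (n + 1) * J 0 +
          (τ / 3) * (τ ^ n * J 0) = τ ^ (n + 1) * J 0 := by
        rw [pow_succ]; ring
      have := hrec n
      linarith
end
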